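/- Let κ > 0, let N₀, N₁ ≥ 0 be real numbers, and let ζ₀, ζ₁ ∈ ℂ satisfy κ|ζ_A|² = 2·sinh(κN_A/2) for A = 0, 1. Define the deformed spinors t = (e^{κN₁/4}·ζ₀, e^{−κN₀/4}·ζ₁) and τ = (e^{−κN₁/4}·ζ₀, e^{κN₀/4}·ζ₁) in ℂ². Then ⟨t|t⟩ = ⟨τ|τ⟩ = (2/κ)·sinh(κ(N₀+N₁)/2). -/

import Mathlib

open Matrix

noncomputable section

/-- `⟨x|`: the conjugate-transpose row vector `(x̄₀, x̄₁)`. -/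
def braC (x : Fin 2 → ℂ) : Fin 2 → ℂ := fun i => star (x i)

/-- `|x]`: the column vector `(−x̄₁, x̄₀)`. -/
def ketS (x : Fin 2 → ℂ) : Fin 2 → ℂ := ![-(star (x 1)), star (x 0)]

/-- `[x|`: the row vector `(−x₁, x₀)`. -/
def braS (x : Fin 2 → ℂ) : Fin 2 → ℂ := ![-(x 1), x 0]

/-- `⟨x|y⟩ = x̄₀y₀ + x̄₁y₁`. -/
def bk (x y : Fin 2 → ℂ) : ℂ := star (x 0) * y 0 + star (x 1) * y 1

/-- `[x|y⟩ = x₀y₁ − x₁y₀`. -/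
def sk (x y : Fin 2 → ℂ) : ℂ := x 0 * y 1 - x 1 * y 0

/-- `⟨x|y] = x̄₁ȳ₀ − x̄₀ȳ₁`. -/
def bs (x y : Fin 2 → ℂ) : ℂ := star (x 1) * star (y 0) - star (x 0) * star (y 1)

/-- `[x|y] = x₀ȳ₀ + x₁ȳ₁`. -/
def ss (x y : Fin 2 → ℂ) : ℂ := x 0 * star (y 0) + x 1 * star (y 1)

end


lemma sinh_aux (a b : ℝ) : Real.exp b * Real.sinh a + Real.exp (-a) * Real.sinh b
    = Real.sinh (a + b) := by
  rw [Real.sinh_eq, Real.sinh_eq, Real.sinh_eq, Real.exp_add, Real.exp_neg, Real.exp_neg,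
    Real.exp_neg, Real.exp_add]
  have ha := (Real.exp_pos a).ne'
  have hb := (Real.exp_pos b).ne'
  field_simp
  ring

lemma star_mul_self_aux (r : ℝ) (ζ : ℂ) :
    star ((r : ℂ) * ζ) * ((r : ℂ) * ζ) = ((r ^ 2 * Complex.normSq ζ : ℝ) : ℂ) := by
  rw [Complex.star_def, RingHom.map_mul, Complex.conj_ofReal]
  push_cast
  have := Complex.normSq_eq_conj_mul_self (z := ζ)
  push_cast at this
  rw [this]; ring

lemma real_norm_aux (κ N₀ N₁ : ℝ) (hκ : 0 < κ) (z₀ z₁ : ℝ)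
    (h₀ : κ * z₀ = 2 * Real.sinh (κ * N₀ / 2))
    (h₁ : κ * z₁ = 2 * Real.sinh (κ * N₁ / 2)) (r s : ℝ)
    (hr : r = Real.exp (κ * N₁ / 2)) (hs : s = Real.exp (-(κ * N₀ / 2))) :
    r * z₀ + s * z₁ = (2 / κ) * Real.sinh (κ * (N₀ + N₁) / 2) := by
  have key := sinh_aux (κ * N₀ / 2) (κ * N₁ / 2)
  have harg : κ * (N₀ + N₁) / 2 = κ * N₀ / 2 + κ * N₁ / 2 := by ring
  rw [harg, ← key, hr, hs]
  have hz₀ : z₀ = 2 * Real.sinh (κ * N₀ / 2) / κ := by field_simp; linarith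
  have hz₁ : z₁ = 2 * Real.sinh (κ * N₁ / 2) / κ := by field_simp; linarith
  rw [hz₀, hz₁]
  field_simp

theorem deformed_spinor_norms (κ N₀ N₁ : ℝ) (hκ : 0 < κ) (hN₀ : 0 ≤ N₀) (hN₁ : 0 ≤ N₁)
    (ζ₀ ζ₁ : ℂ)
    (h₀ : κ * Complex.normSq ζ₀ = 2 * Real.sinh (κ * N₀ / 2))
    (h₁ : κ * Complex.normSq ζ₁ = 2 * Real.sinh (κ * N₁ / 2)) :
    let t : Fin 2 → ℂ := ![(Real.exp (κ * N₁ / 4) : ℂ) * ζ₀,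
                           (Real.exp (-(κ * N₀) / 4) : ℂ) * ζ₁]
    let τ : Fin 2 → ℂ := ![(Real.exp (-(κ * N₁) / 4) : ℂ) * ζ₀,
                           (Real.exp (κ * N₀ / 4) : ℂ) * ζ₁]
    bk t t = ((2 / κ) * Real.sinh (κ * (N₀ + N₁) / 2) : ℝ) ∧
    bk τ τ = ((2 / κ) * Real.sinh (κ * (N₀ + N₁) / 2) : ℝ) := by
  intro t τ
  have hsq : ∀ x : ℝ, Real.exp x ^ 2 = Real.exp (2 * x) := by
    intro x; rw [sq, ← Real.exp_add]; ring_nf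
  constructor
  · show star (t 0) * t 0 + star (t 1) * t 1 = _
    simp only [t, Matrix.cons_val_zero, Matrix.cons_val_one, Matrix.head_cons,
      star_mul_self_aux]
    rw [← Complex.ofReal_add]
    congr 1
    rw [hsq, hsq]
    exact real_norm_aux κ N₀ N₁ hκ _ _ h₀ h₁ _ _ (by ring_nf) (by ring_nf)
  · show star (τ 0) * τ 0 + star (τ 1) * τ 1 = _
    simp only [τ, Matrix.cons_val_zero, Matrix.cons_val_one, Matrix.head_cons,
      star_mul_self_aux]
    rw [← Complex.ofReal_add, add_comm ((Real.exp (-(κ * N₁) / 4)) ^ 2 * Complex.normSq ζ₀)]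
    congr 1
    rw [hsq, hsq, show κ * (N₀ + N₁) / 2 = κ * (N₁ + N₀) / 2 by ring]
    exact real_norm_aux κ N₁ N₀ hκ _ _ h₁ h₀ _ _ (by ring_nf) (by ring_nf)
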